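/- arXiv:1208.3501 — 2 statements merged into one kernel-verified Lean document; each statement's English description precedes it below -/
import Mathlib

section
/- Let (X, F, μ, T) be a non-trivial ergodic subshift with Borel σ-algebra F, and let S be a self-homeomorphism of a compact metric space Y with Borel σ-algebra B. Suppose ξ is a μ-joining (a (T×S)-invariant measure on X×Y with X-marginal μ) satisfying: (i) T_X ⊗ B ⊆ F ⊗ T_Y mod ξ and (ii) F ⊗ T_Y ⊆ T_X ⊗ B mod ξ, where T_X and T_Y are the trivial σ-algebras. Then there exists an embedding Ψ: X → Y of (X, T, μ) into (Y, S) with ξ(F × B) = μ(F ∩ Ψ^{−1}(B)) for all F ∈ F, B ∈ B. Conversely, if Ψ is an embedding of (X, T, μ) into (Y, S), then the measure ξ defined by ξ(F × B) = μ(F ∩ Ψ^{−1}(B)) satisfies conditions (i) and (ii). -/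
open MeasureTheory Filter Set
open scoped ENNReal symmDiff

/-- `Ψ` is an embedding of the measure-preserving system `(X, μ, T)` into `(Y, S)`. -/
def IsMeasEmbedding {X Y : Type*} [MeasurableSpace X] [MeasurableSpace Y]
    (μ : Measure X) (T : X → X) (S : Y → Y) (Ψ : X → Y) : Prop :=
  Measurable Ψ ∧ ∃ X' : Set X, MeasurableSet X' ∧ μ X'ᶜ = 0 ∧ Set.InjOn Ψ X' ∧
    ∀ x ∈ X', Ψ (T x) = S (Ψ x)

/-- `m₁ ⊆ m₂ mod ξ`: every `m₁`-measurable set agrees with an `m₂`-measurable set up to a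
`ξ`-null symmetric difference. -/
def SubAlgMod {Z : Type*} [MeasurableSpace Z] (ξ : Measure Z)
    (m₁ m₂ : MeasurableSpace Z) : Prop :=
  ∀ s : Set Z, MeasurableSet[m₁] s → ∃ t : Set Z, MeasurableSet[m₂] t ∧ ξ (s ∆ t) = 0

/-- The shift map on bi-infinite sequences. -/
def fullShift {A : Type*} : (ℤ → A) → (ℤ → A) := fun x n => x (n + 1)

noncomputable instance (k : ℕ) : MetricSpace (Fin k) :=
  MetricSpace.induced (fun i : Fin k => (i : ℝ))
    (fun a b h => Fin.val_injective (Nat.cast_injective h)) inferInstance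

/-- The standard metric on the full shift over a finite alphabet. -/
noncomputable instance (k : ℕ) : MetricSpace (ℤ → Fin k) := PiCountable.metricSpace

instance (k : ℕ) : MeasurableSpace (ℤ → Fin k) := borel _
instance (k : ℕ) : BorelSpace (ℤ → Fin k) := ⟨rfl⟩

/-- If every Borel set in the second coordinate agrees mod `ξ` with a set depending only on the
first coordinate, then the second coordinate is `ξ`-a.e. a measurable function of the first. -/
lemma graphFun {α β : Type*} [MeasurableSpace α] [MeasurableSpace β]
    [TopologicalSpace β] [PolishSpace β] [BorelSpace β] [Nonempty β]
    (ξ : Measure (α × β))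
    (h : ∀ B : Set β, MeasurableSet B →
      ∃ F : Set α, MeasurableSet F ∧ ξ ((Prod.snd ⁻¹' B) ∆ (Prod.fst ⁻¹' F)) = 0) :
    ∃ Ψ : α → β, Measurable Ψ ∧ ∃ N : Set (α × β), MeasurableSet N ∧ ξ N = 0 ∧
      ∀ z : α × β, z ∉ N → Ψ z.1 = z.2 := by
  classical
  -- enumerate a countable basis of `β`
  obtain ⟨B, hB⟩ : ∃ B : ℕ → Set β, insert ∅ (TopologicalSpace.countableBasis β) = range B :=
    ((TopologicalSpace.countable_countableBasis β).insert ∅).exists_eq_range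
      (insert_nonempty _ _)
  have hBopen : ∀ n, IsOpen (B n) := by
    intro n
    have : B n ∈ insert ∅ (TopologicalSpace.countableBasis β) := by
      rw [hB]; exact mem_range_self n
    rcases this with h | h
    · simp [h]
    · exact TopologicalSpace.isOpen_of_mem_countableBasis h
  have hsep : ∀ y y' : β, (∀ n, y ∈ B n ↔ y' ∈ B n) → y = y' := by
    intro y y' hyy'
    by_contra hne
    obtain ⟨t, ht, hyt, hty'⟩ :=
      (TopologicalSpace.isBasis_countableBasis β).exists_subset_of_mem_open
        (show y ∈ ({y'}ᶜ : Set β) from hne) isOpen_compl_singleton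
    have : t ∈ range B := by rw [← hB]; exact mem_insert_of_mem _ ht
    obtain ⟨n, rfl⟩ := this
    exact (hty' ((hyy' n).1 hyt)) rfl
  choose F hFmeas hFnull using fun n => h (B n) (hBopen n).measurableSet
  -- the coding map into the Cantor space and a measurable retraction
  let e : β → ℕ → Bool := fun y n => if y ∈ B n then true else false
  have he_meas : Measurable e := by
    refine measurable_pi_iff.2 fun n => Measurable.ite (hBopen n).measurableSet
      measurable_const measurable_const
  have he_inj : Function.Injective e := by
    intro y y' hyy'
    refine hsep y y' fun n => ?_
    have := congrFun hyy' n
    by_cases hy : y ∈ B n <;> by_cases hy' : y' ∈ B n <;> simp_all [e]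
  have he : MeasurableEmbedding e := he_meas.measurableEmbedding he_inj
  obtain ⟨r, hr_meas, hre⟩ :=
    he.exists_measurable_extend measurable_id (fun _ => ⟨Classical.arbitrary β⟩)
  let c : α → ℕ → Bool := fun x n => if x ∈ F n then true else false
  have hc_meas : Measurable c :=
    measurable_pi_iff.2 fun n => Measurable.ite (hFmeas n) measurable_const measurable_const
  refine ⟨r ∘ c, hr_meas.comp hc_meas, ⋃ n, (Prod.snd ⁻¹' B n) ∆ (Prod.fst ⁻¹' F n),
    MeasurableSet.iUnion fun n => (measurable_snd (hBopen n).measurableSet).symmDiff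
      (measurable_fst (hFmeas n)), measure_iUnion_null hFnull, ?_⟩
  intro z hz
  have hmem : ∀ n, z.1 ∈ F n ↔ z.2 ∈ B n := by
    intro n
    have hn : z ∉ (Prod.snd ⁻¹' B n) ∆ (Prod.fst ⁻¹' F n) := fun hmem => hz (mem_iUnion.2 ⟨n, hmem⟩)
    rw [Set.mem_symmDiff] at hn
    push_neg at hn
    exact ⟨fun hF1 => hn.2 hF1, fun hB2 => hn.1 hB2⟩
  have : c z.1 = e z.2 := by
    funext n
    simp only [c, e]
    by_cases hx : z.1 ∈ F n
    · rw [if_pos hx, if_pos ((hmem n).1 hx)]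
    · rw [if_neg hx, if_neg fun hb => hx ((hmem n).2 hb)]
  show r (c z.1) = z.2
  rw [this]
  exact congrFun hre z.2

/-- **Joinings satisfying the two σ-algebra containment conditions are exactly the
embeddings.**  Let `(Xs, μ, σX)` be a non-trivial ergodic subshift and `S` a
self-homeomorphism of a compact metric space `Y`.  If a `μ`-joining `ξ` satisfies
`T_X ⊗ B ⊆ F ⊗ T_Y mod ξ` and `F ⊗ T_Y ⊆ T_X ⊗ B mod ξ`, then `ξ` comes from an embedding
`Ψ` of `(Xs, μ, σX)` into `(Y, S)` via `ξ(F × B) = μ(F ∩ Ψ⁻¹ B)`; conversely, the measure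
associated in this way with any embedding satisfies both conditions. -/
theorem joining_embedding_correspondence
    (k : ℕ) (Xs : Set (ℤ → Fin k)) (hne : Xs.Nonempty) (hcl : IsClosed Xs)
    (hsinv : fullShift '' Xs = Xs) (hnontriv : ¬ Xs.Finite)
    (σX : ↥Xs ≃ ↥Xs) (hσ : ∀ x : ↥Xs, (σX x : ℤ → Fin k) = fullShift (x : ℤ → Fin k))
    (μ : Measure ↥Xs) [IsProbabilityMeasure μ] (herg : Ergodic (⇑σX) μ)
    {Y : Type*} [MetricSpace Y] [CompactSpace Y] [MeasurableSpace Y] [BorelSpace Y]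
    (S : Y ≃ₜ Y) :
    (∀ ξ : Measure (↥Xs × Y), IsProbabilityMeasure ξ →
      MeasurePreserving (Prod.map (⇑σX) (⇑S)) ξ ξ → ξ.map Prod.fst = μ →
      SubAlgMod ξ (MeasurableSpace.comap Prod.snd inferInstance)
        (MeasurableSpace.comap Prod.fst inferInstance) →
      SubAlgMod ξ (MeasurableSpace.comap Prod.fst inferInstance)
        (MeasurableSpace.comap Prod.snd inferInstance) →
      ∃ Ψ : ↥Xs → Y, IsMeasEmbedding μ (⇑σX) (⇑S) Ψ ∧
        ∀ (F : Set ↥Xs) (B : Set Y), MeasurableSet F → MeasurableSet B →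
          ξ (F ×ˢ B) = μ (F ∩ Ψ ⁻¹' B)) ∧
    (∀ Ψ : ↥Xs → Y, IsMeasEmbedding μ (⇑σX) (⇑S) Ψ →
      SubAlgMod (μ.map fun x => (x, Ψ x)) (MeasurableSpace.comap Prod.snd inferInstance)
        (MeasurableSpace.comap Prod.fst inferInstance) ∧
      SubAlgMod (μ.map fun x => (x, Ψ x)) (MeasurableSpace.comap Prod.fst inferInstance)
        (MeasurableSpace.comap Prod.snd inferInstance)) := by
  haveI : Nonempty ↥Xs := hne.to_subtype
  haveI : PolishSpace (ℤ → Fin k) := by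
    haveI : CompleteSpace (ℤ → Fin k) := complete_of_compact
    haveI : SecondCountableTopology (ℤ → Fin k) := inferInstance
    haveI : TopologicalSpace.IsCompletelyMetrizableSpace (ℤ → Fin k) := inferInstance
    exact {}
  haveI polX : PolishSpace ↥Xs := hcl.polishSpace
  -- measurability of the shift on the subshift
  have hσcont : Continuous (⇑σX) := by
    refine continuous_induced_rng.2 ?_
    have : (Subtype.val ∘ ⇑σX) = fun x : ↥Xs => fullShift (x : ℤ → Fin k) := funext hσ
    rw [this]
    exact (continuous_pi fun n => continuous_apply (n + 1)).comp continuous_subtype_val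
  have hσmeas : Measurable (⇑σX) := hσcont.measurable
  constructor
  · -- forward direction
    intro ξ hξp hξinv hmarg hA hB
    haveI hYne : Nonempty Y := by
      by_contra hY
      rw [not_nonempty_iff] at hY
      have h1 : ξ Set.univ = 1 := measure_univ
      rw [Set.univ_eq_empty_iff.2 inferInstance] at h1
      simp at h1
    -- first application of graphFun: Ψ
    have hA' : ∀ Bs : Set Y, MeasurableSet Bs →
        ∃ F : Set ↥Xs, MeasurableSet F ∧ ξ ((Prod.snd ⁻¹' Bs) ∆ (Prod.fst ⁻¹' F)) = 0 := by
      intro Bs hBs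
      obtain ⟨t, ⟨F, hF, rfl⟩, hnull⟩ := hA (Prod.snd ⁻¹' Bs) ⟨Bs, hBs, rfl⟩
      exact ⟨F, hF, hnull⟩
    obtain ⟨Ψ, hΨm, N, hNm, hN0, hNg⟩ := graphFun ξ hA'
    -- second application, to the swapped measure: Φ
    have hswap : Measurable (Prod.swap : ↥Xs × Y → Y × ↥Xs) := measurable_swap
    have hB' : ∀ Fs : Set ↥Xs, MeasurableSet Fs →
        ∃ Bs : Set Y, MeasurableSet Bs ∧
          (ξ.map Prod.swap) ((Prod.snd ⁻¹' Fs) ∆ (Prod.fst ⁻¹' Bs)) = 0 := by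
      intro Fs hFs
      obtain ⟨t, ⟨Bs, hBs, rfl⟩, hnull⟩ := hB (Prod.fst ⁻¹' Fs) ⟨Fs, hFs, rfl⟩
      refine ⟨Bs, hBs, ?_⟩
      rw [Measure.map_apply hswap (((measurable_snd hFs)).symmDiff (measurable_fst hBs))]
      have : (Prod.swap : ↥Xs × Y → Y × ↥Xs) ⁻¹' ((Prod.snd ⁻¹' Fs) ∆ (Prod.fst ⁻¹' Bs)) =
          (Prod.fst ⁻¹' Fs) ∆ (Prod.snd ⁻¹' Bs) := by
        rw [Set.preimage_symmDiff]; rfl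
      rw [this]
      exact hnull
    obtain ⟨Φ, hΦm, N₂, hN₂m, hN₂0, hN₂g⟩ := graphFun (ξ.map Prod.swap) hB'
    have hN₂0' : ξ (Prod.swap ⁻¹' N₂) = 0 := by
      rw [← Measure.map_apply hswap hN₂m]; exact hN₂0
    -- the combined null set
    have hmapmeas : Measurable (Prod.map (⇑σX) (⇑S)) :=
      ((hσmeas.comp measurable_fst).prodMk (S.continuous.measurable.comp measurable_snd))
    set M : Set (↥Xs × Y) := N ∪ Prod.swap ⁻¹' N₂ ∪ (Prod.map (⇑σX) (⇑S)) ⁻¹' N with hMdef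
    have hM0 : ξ M = 0 := by
      refine measure_union_null (measure_union_null hN0 hN₂0') ?_
      rw [hξinv.measure_preimage hNm.nullMeasurableSet]
      exact hN0
    have hgood : ∀ z : ↥Xs × Y, z ∉ M →
        Ψ z.1 = z.2 ∧ Φ (Ψ z.1) = z.1 ∧ Ψ (σX z.1) = S (Ψ z.1) := by
      intro z hz
      have h1 : z ∉ N := fun h => hz (Or.inl (Or.inl h))
      have h2 : z ∉ Prod.swap ⁻¹' N₂ := fun h => hz (Or.inl (Or.inr h))
      have h3 : z ∉ (Prod.map (⇑σX) (⇑S)) ⁻¹' N := fun h => hz (Or.inr h)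
      have e1 : Ψ z.1 = z.2 := hNg z h1
      have e2 : Φ z.2 = z.1 := hN₂g z.swap h2
      have e3 : Ψ (σX z.1) = S z.2 := hNg (Prod.map (⇑σX) (⇑S) z) h3
      exact ⟨e1, by rw [e1]; exact e2, by rw [e3, e1]⟩
    -- the good set in X
    set X' : Set ↥Xs := {x | Φ (Ψ x) = x ∧ Ψ (σX x) = S (Ψ x)} with hX'def
    have hX'm : MeasurableSet X' := by
      have h1 : MeasurableSet {x : ↥Xs | Φ (Ψ x) = x} :=
        StronglyMeasurable.measurableSet_eq_fun ((hΦm.comp hΨm).stronglyMeasurable) measurable_id.stronglyMeasurable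
      have h2 : MeasurableSet {x : ↥Xs | Ψ (σX x) = S (Ψ x)} :=
        StronglyMeasurable.measurableSet_eq_fun ((hΨm.comp hσmeas).stronglyMeasurable)
          ((S.continuous.measurable.comp hΨm).stronglyMeasurable)
      exact h1.inter h2
    have hX'null : μ X'ᶜ = 0 := by
      have hsub : Prod.fst ⁻¹' X'ᶜ ⊆ M := by
        intro z hz
        by_contra hzM
        exact hz ((hgood z hzM).2 : z.1 ∈ X')
      have : μ X'ᶜ = ξ (Prod.fst ⁻¹' X'ᶜ) := by
        rw [← hmarg, Measure.map_apply measurable_fst hX'm.compl]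
      rw [this]
      exact measure_mono_null hsub hM0
    refine ⟨Ψ, ⟨hΨm, X', hX'm, hX'null, ?_, fun x hx => hx.2⟩, ?_⟩
    · intro x hx x' hx' hxx'
      calc x = Φ (Ψ x) := hx.1.symm
        _ = Φ (Ψ x') := by rw [hxx']
        _ = x' := hx'.1
    · intro F Bs hF hBs
      have key : ξ ((F ×ˢ Bs) ∆ (Prod.fst ⁻¹' (F ∩ Ψ ⁻¹' Bs))) = 0 := by
        refine measure_mono_null ?_ hN0
        intro z hz
        by_contra hzN
        have e1 : Ψ z.1 = z.2 := hNg z hzN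
        rw [Set.mem_symmDiff] at hz
        rcases hz with ⟨⟨hz1, hz2⟩, hz3⟩ | ⟨hz3, hz2⟩
        · exact hz3 ⟨hz1, by rw [Set.mem_preimage, e1]; exact hz2⟩
        · rcases hz3 with ⟨hz4, hz5⟩
          exact hz2 ⟨hz4, by rw [← e1]; exact hz5⟩
      have := measure_congr (measure_symmDiff_eq_zero_iff.mp key)
      rw [this, ← hmarg, Measure.map_apply measurable_fst (hF.inter (hΨm hBs))]
  · -- converse direction
    rintro Ψ ⟨hΨm, X', hX'm, hX'null, hinj, hequiv⟩
    haveI : StandardBorelSpace ↥Xs := inferInstance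
    have hι : Measurable (fun x : ↥Xs => (x, Ψ x)) := measurable_id.prodMk hΨm
    constructor
    · rintro s ⟨Bs, hBs, rfl⟩
      refine ⟨Prod.fst ⁻¹' (Ψ ⁻¹' Bs), ⟨Ψ ⁻¹' Bs, hΨm hBs, rfl⟩, ?_⟩
      rw [Measure.map_apply hι
        ((measurable_snd hBs).symmDiff (measurable_fst (hΨm hBs)))]
      have : (fun x : ↥Xs => (x, Ψ x)) ⁻¹'
          ((Prod.snd ⁻¹' Bs) ∆ (Prod.fst ⁻¹' (Ψ ⁻¹' Bs))) = ∅ := by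
        rw [Set.preimage_symmDiff]
        have : (fun x : ↥Xs => (x, Ψ x)) ⁻¹' (Prod.snd ⁻¹' Bs) =
            (fun x : ↥Xs => (x, Ψ x)) ⁻¹' (Prod.fst ⁻¹' (Ψ ⁻¹' Bs)) := rfl
        rw [this, symmDiff_self]; rfl
      rw [this]
      exact measure_empty
    · rintro s ⟨F, hF, rfl⟩
      have hBmeas : MeasurableSet (Ψ '' (F ∩ X')) :=
        (hF.inter hX'm).image_of_measurable_injOn hΨm (hinj.mono inter_subset_right)
      refine ⟨Prod.snd ⁻¹' (Ψ '' (F ∩ X')), ⟨Ψ '' (F ∩ X'), hBmeas, rfl⟩, ?_⟩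
      rw [Measure.map_apply hι ((measurable_fst hF).symmDiff (measurable_snd hBmeas))]
      refine measure_mono_null ?_ hX'null
      intro x hx
      rw [Set.mem_preimage, Set.mem_symmDiff] at hx
      intro hxX'
      rcases hx with ⟨hx1, hx2⟩ | ⟨hx1, hx2⟩
      · exact hx2 ⟨x, ⟨hx1, hxX'⟩, rfl⟩
      · obtain ⟨x', ⟨hx'F, hx'X'⟩, hx'eq⟩ := hx1
        exact hx2 (by rw [← hinj hx'X' hxX' hx'eq]; exact hx'F)
end

section
/- In the setting below, for each n, ℓ ≥ 1 the set E^{n,ℓ}_μ consisting of joinings ξ ∈ M_0 satisfying (i) T_X ⊗ σ(Q_ℓ) ⊆^{1/n} (⋁_{i∈Z} T^{−i}P) ⊗ T_Y mod ξ and (ii) σ(P) ⊗ T_Y ⊆^{1/n} T_X ⊗ ⋁_{i∈Z} S^{−i}Q_ℓ mod ξ is a relatively open subset of M_0 in the weak* topology. -/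
open MeasureTheory Filter Set
open scoped ENNReal

/-- Shannon entropy of the finite-valued observable `P` with respect to `μ`. -/
noncomputable def infoEntropy {X : Type*} [MeasurableSpace X] (μ : Measure X)
    {α : Type*} [Fintype α] (P : X → α) : ℝ :=
  ∑ a : α, Real.negMulLog (μ (P ⁻¹' {a})).toReal

/-- Entropy of the transformation `T` with respect to the observable (finite partition) `P`. -/
noncomputable def entropyWrt {X : Type*} [MeasurableSpace X] (μ : Measure X) (T : X → X)
    {α : Type*} [Fintype α] (P : X → α) : ℝ :=
  Filter.atTop.liminf fun n : ℕ =>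
    infoEntropy μ (fun x => fun i : Fin n => P (T^[(i : ℕ)] x)) / n

/-- Kolmogorov–Sinai (measure-theoretic) entropy of `T` with respect to `μ`. -/
noncomputable def ksEntropy {X : Type*} [MeasurableSpace X] (μ : Measure X) (T : X → X) : ℝ≥0∞ :=
  ⨆ (k : ℕ) (P : X → Fin k) (_ : Measurable P), ENNReal.ofReal (entropyWrt μ T P)

/-- Topological entropy (Bowen–Dinaburg, via dynamical covers). -/
noncomputable def topEntropy {Y : Type*} [UniformSpace Y] (S : Y → Y) : EReal :=
  Dynamics.coverEntropy S Set.univ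

/-- `L` is a gap function for the invertible system `S` at scale `ε`. -/
def IsGapFunction {Y : Type*} [MetricSpace Y] (S : Y ≃ Y) (ε : ℝ) (L : ℕ → ℕ) : Prop :=
  Monotone L ∧ (∀ m, 0 < L m) ∧
    ∀ (n : ℕ) (y : Fin n → Y) (a b : Fin n → ℤ),
      (∀ i, a i ≤ b i) →
      (∀ i j : Fin n, (i : ℕ) + 1 = (j : ℕ) → (L (b j - a j).toNat : ℤ) ≤ a j - b i) →
      ∃ z : Y, ∀ (i : Fin n) (kk : ℤ), a i ≤ kk → kk ≤ b i →
        dist ((S ^ kk) z) ((S ^ kk) (y i)) ≤ ε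

/-- Almost weak specification: for every `ε > 0` there is a sublinear gap function. -/
def AlmostWeakSpec {Y : Type*} [MetricSpace Y] (S : Y ≃ Y) : Prop :=
  ∀ ε : ℝ, 0 < ε → ∃ L : ℕ → ℕ, IsGapFunction S ε L ∧
    Filter.Tendsto (fun m : ℕ => (L m : ℝ) / m) Filter.atTop (nhds 0)

/-- A measure on a topological space has full support. -/
def FullSupport {Y : Type*} [TopologicalSpace Y] [MeasurableSpace Y] (ν : Measure Y) : Prop :=
  ∀ U : Set Y, IsOpen U → U.Nonempty → 0 < ν U

/-- The space `M₀` of ergodic `μ`-joinings `ξ` of `(Xs, μ, σX)` and `(Y, S)` satisfying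
`h_{π₂*ξ}(S) ≥ h_μ(σX)`. -/
def joiningM0 {k : ℕ} (Xs : Set (ℤ → Fin k)) (σX : ↥Xs ≃ ↥Xs) (μ : Measure ↥Xs)
    {Y : Type*} [MetricSpace Y] [MeasurableSpace Y] (S : Y ≃ₜ Y) :
    Set (ProbabilityMeasure (↥Xs × Y)) :=
  {ξ | (ξ : Measure (↥Xs × Y)).map Prod.fst = μ ∧
    Ergodic (Prod.map (⇑σX) (⇑S)) (ξ : Measure (↥Xs × Y)) ∧
    ksEntropy μ (⇑σX) ≤ ksEntropy ((ξ : Measure (↥Xs × Y)).map Prod.snd) (⇑S)}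

open scoped symmDiff

/-- A finite measurable partition of the whole space. -/
def IsFinPartition {Y : Type*} [MeasurableSpace Y] (P : Finset (Set Y)) : Prop :=
  (∀ s ∈ P, MeasurableSet s) ∧ ⋃₀ (P : Set (Set Y)) = Set.univ ∧
    (P : Set (Set Y)).Pairwise (Disjoint · ·)

/-- `m₁ ⊆^ε m₂ mod ξ`: every `m₁`-measurable set agrees with an `m₂`-measurable set up to a
symmetric difference of `ξ`-measure < `ε`. -/
def SubAlgModLt {Z : Type*} [MeasurableSpace Z] (ξ : Measure Z)
    (m₁ m₂ : MeasurableSpace Z) (ε : ℝ) : Prop :=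
  ∀ s : Set Z, MeasurableSet[m₁] s →
    ∃ t : Set Z, MeasurableSet[m₂] t ∧ ξ (s ∆ t) < ENNReal.ofReal ε

/-- The σ-algebra `σ(P)` generated by the natural (zeroth-coordinate) partition of a
subshift. -/
def natPartAlg (k : ℕ) (Xs : Set (ℤ → Fin k)) : MeasurableSpace ↥Xs :=
  MeasurableSpace.comap (fun x : ↥Xs => (x : ℤ → Fin k) 0) ⊤

/-- The σ-algebra `⋁_{i ∈ ℤ} T^{-i} P` generated by all shifted copies of the natural
partition of a subshift. -/
def natPartOrbitAlg (k : ℕ) (Xs : Set (ℤ → Fin k)) (σX : ↥Xs ≃ ↥Xs) :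
    MeasurableSpace ↥Xs :=
  ⨆ i : ℤ, MeasurableSpace.comap (fun x : ↥Xs => (((σX ^ i) x : ℤ → Fin k)) 0) ⊤

/-- The σ-algebra `σ(Q)` generated by a finite partition `Q`. -/
def partAlg {Y : Type*} (Q : Finset (Set Y)) : MeasurableSpace Y :=
  MeasurableSpace.generateFrom ↑Q

/-- The σ-algebra `⋁_{i ∈ ℤ} S^{-i} Q` generated by all iterates of a finite partition `Q`
under the invertible map `S`. -/
def partOrbitAlg {Y : Type*} (S : Y ≃ Y) (Q : Finset (Set Y)) : MeasurableSpace Y :=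
  ⨆ i : ℤ, MeasurableSpace.comap (⇑(S ^ i)) (partAlg Q)

/-- The set `E^{n,ℓ}_μ` of `1/n`-approximate embeddings (at partition scale `ℓ`): joinings
`ξ ∈ M₀` with `T_X ⊗ σ(Q_ℓ) ⊆^{1/n} (⋁_i T^{-i}P) ⊗ T_Y mod ξ` and
`σ(P) ⊗ T_Y ⊆^{1/n} T_X ⊗ ⋁_i S^{-i}Q_ℓ mod ξ`. -/
def approxEmbeddings {k : ℕ} (Xs : Set (ℤ → Fin k)) (σX : ↥Xs ≃ ↥Xs) (μ : Measure ↥Xs)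
    {Y : Type*} [MetricSpace Y] [MeasurableSpace Y] (S : Y ≃ₜ Y) (Q : ℕ → Finset (Set Y))
    (n ℓ : ℕ) : Set (ProbabilityMeasure (↥Xs × Y)) :=
  {ξ ∈ joiningM0 Xs σX μ S |
    SubAlgModLt (ξ : Measure (↥Xs × Y))
      (MeasurableSpace.comap Prod.snd (partAlg (Q ℓ)))
      (MeasurableSpace.comap Prod.fst (natPartOrbitAlg k Xs σX)) (1 / n) ∧
    SubAlgModLt (ξ : Measure (↥Xs × Y))
      (MeasurableSpace.comap Prod.fst (natPartAlg k Xs))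
      (MeasurableSpace.comap Prod.snd (partOrbitAlg S.toEquiv (Q ℓ))) (1 / n)}

namespace EmbedAux
open Topology


lemma symmDiff_union_subset {α : Type*} (A B A' B' : Set α) :
    (A ∪ B) ∆ (A' ∪ B') ⊆ (A ∆ A') ∪ (B ∆ B') := by
  intro x hx
  simp only [Set.mem_symmDiff, Set.mem_union] at hx ⊢
  tauto

lemma meas_symmDiff_triangle {Z : Type*} [MeasurableSpace Z] (ξ : Measure Z) (s t u : Set Z) :
    ξ (s ∆ u) ≤ ξ (s ∆ t) + ξ (t ∆ u) :=
  le_trans (measure_mono (symmDiff_triangle s t u)) (measure_union_le _ _)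

lemma frontier_inter_subset' {Z : Type*} [TopologicalSpace Z] (A B : Set Z) :
    frontier (A ∩ B) ⊆ frontier A ∪ frontier B :=
  (frontier_inter_subset A B).trans
    (Set.union_subset_union Set.inter_subset_left Set.inter_subset_right)

lemma frontier_union_subset' {Z : Type*} [TopologicalSpace Z] (A B : Set Z) :
    frontier (A ∪ B) ⊆ frontier A ∪ frontier B :=
  (frontier_union_subset A B).trans
    (Set.union_subset (Set.inter_subset_left.trans Set.subset_union_left)
      (Set.inter_subset_right.trans Set.subset_union_right))

lemma frontier_symmDiff_subset {Z : Type*} [TopologicalSpace Z] (A B : Set Z) :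
    frontier (A ∆ B) ⊆ frontier A ∪ frontier B := by
  rw [Set.symmDiff_def, Set.diff_eq, Set.diff_eq]
  refine (frontier_union_subset' _ _).trans (Set.union_subset ?_ ?_)
  · refine (frontier_inter_subset' _ _).trans ?_
    rw [frontier_compl]
  · refine (frontier_inter_subset' _ _).trans ?_
    rw [frontier_compl]
    exact Set.union_subset Set.subset_union_right Set.subset_union_left

lemma closure_subset_union_frontier {Z : Type*} [TopologicalSpace Z] (A : Set Z) :
    closure A ⊆ A ∪ frontier A := by
  intro x hx
  by_cases h : x ∈ A
  · exact Or.inl h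
  · exact Or.inr ⟨hx, fun hi => h (interior_subset hi)⟩

/-- Portmanteau-type open neighbourhood: if a closed set has `ξ₀`-measure `< c`, then this
persists on an open neighbourhood of `ξ₀` in the weak topology. -/
lemma exists_open_nhds_measure_lt {Z : Type*} [TopologicalSpace Z]
    [TopologicalSpace.PseudoMetrizableSpace Z] [MeasurableSpace Z] [OpensMeasurableSpace Z]
    {F : Set Z} (hF : IsClosed F) {c : ℝ≥0∞} (ξ₀ : ProbabilityMeasure Z)
    (h : (ξ₀ : Measure Z) F < c) :
    ∃ W : Set (ProbabilityMeasure Z), IsOpen W ∧ ξ₀ ∈ W ∧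
      ∀ ξ : ProbabilityMeasure Z, ξ ∈ W → (ξ : Measure Z) F < c := by
  have htend := HasOuterApproxClosed.tendsto_lintegral_apprSeq hF (ξ₀ : Measure Z)
  obtain ⟨N, hN⟩ := (htend.eventually_lt_const h).exists
  refine ⟨(fun ξ : ProbabilityMeasure Z =>
      ((ξ.toFiniteMeasure.testAgainstNN (hF.apprSeq N) : ℝ≥0∞))) ⁻¹' Set.Iio c, ?_, ?_, ?_⟩
  · exact (ENNReal.continuous_coe.comp
      (ProbabilityMeasure.continuous_testAgainstNN_eval _)).isOpen_preimage _ isOpen_Iio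
  · show ((ξ₀.toFiniteMeasure.testAgainstNN (hF.apprSeq N) : ℝ≥0∞)) < c
    rw [FiniteMeasure.testAgainstNN_coe_eq]
    exact hN
  · intro ξ hξ
    have h1 := HasOuterApproxClosed.measure_le_lintegral hF (μ := (ξ : Measure Z)) N
    have h2 : (∫⁻ x, (hF.apprSeq N x : ℝ≥0∞) ∂(ξ : Measure Z)) < c := by
      have := hξ
      rwa [Set.mem_preimage, Set.mem_Iio, FiniteMeasure.testAgainstNN_coe_eq] at this
    exact lt_of_le_of_lt h1 h2



lemma partition_compl_sUnion {Y : Type*} (Q : Finset (Set Y))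
    (hcover : ⋃₀ (Q : Set (Set Y)) = Set.univ)
    (hdisj : (Q : Set (Set Y)).Pairwise (Disjoint · ·)) {𝒮 : Set (Set Y)} (h𝒮 : 𝒮 ⊆ ↑Q) :
    (⋃₀ 𝒮)ᶜ = ⋃₀ ((Q : Set (Set Y)) \ 𝒮) := by
  ext x
  simp only [Set.mem_compl_iff, Set.mem_sUnion, Set.mem_diff, not_exists]
  constructor
  · intro hx
    have hxu : x ∈ ⋃₀ (Q : Set (Set Y)) := by rw [hcover]; trivial
    obtain ⟨q, hq, hxq⟩ := hxu
    exact ⟨q, ⟨hq, fun h => hx q ⟨h, hxq⟩⟩, hxq⟩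
  · rintro ⟨q, ⟨hqQ, hq𝒮⟩, hxq⟩ q' ⟨hq'𝒮, hxq'⟩
    have hne : q ≠ q' := fun h => hq𝒮 (h ▸ hq'𝒮)
    exact Set.disjoint_left.mp (hdisj hqQ (h𝒮 hq'𝒮) hne) hxq hxq'

lemma partition_eq_sUnion {Y : Type*} (Q : Finset (Set Y))
    (hcover : ⋃₀ (Q : Set (Set Y)) = Set.univ)
    (hdisj : (Q : Set (Set Y)).Pairwise (Disjoint · ·)) :
    ∀ s, MeasurableSet[MeasurableSpace.generateFrom (Q : Set (Set Y))] s →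
      ∃ 𝒮 : Set (Set Y), 𝒮 ⊆ ↑Q ∧ s = ⋃₀ 𝒮 := by
  intro s hs
  let G : MeasurableSpace Y :=
    { MeasurableSet' := fun s => ∃ 𝒮 : Set (Set Y), 𝒮 ⊆ ↑Q ∧ s = ⋃₀ 𝒮
      measurableSet_empty := ⟨∅, Set.empty_subset _, by simp⟩
      measurableSet_compl := by
        rintro s ⟨𝒮, h𝒮, rfl⟩
        exact ⟨↑Q \ 𝒮, Set.diff_subset, partition_compl_sUnion Q hcover hdisj h𝒮⟩
      measurableSet_iUnion := by
        intro f hf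
        choose 𝒮 h𝒮 hf' using hf
        refine ⟨⋃ m, 𝒮 m, Set.iUnion_subset h𝒮, ?_⟩
        rw [Set.sUnion_iUnion]
        exact Set.iUnion_congr hf' }
  have hCle : MeasurableSpace.generateFrom (Q : Set (Set Y)) ≤ G :=
    MeasurableSpace.generateFrom_le (fun q hq => ⟨{q}, by simpa using hq, by simp⟩)
  exact hCle _ hs

lemma frontier_sUnion_subset {Y : Type*} [TopologicalSpace Y] (Q : Finset (Set Y))
    (hcover : ⋃₀ (Q : Set (Set Y)) = Set.univ)
    (hdisj : (Q : Set (Set Y)).Pairwise (Disjoint · ·)) {𝒮 : Set (Set Y)} (h𝒮 : 𝒮 ⊆ ↑Q) :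
    frontier (⋃₀ 𝒮) ⊆ ⋃ q ∈ Q, frontier q := by
  intro x hx
  have hfin : 𝒮.Finite := Q.finite_toSet.subset h𝒮
  have hx1 : x ∈ closure (⋃₀ 𝒮) := frontier_subset_closure hx
  have hx2 : x ∈ closure (⋃₀ ((Q : Set (Set Y)) \ 𝒮)) := by
    have h := (frontier_eq_closure_inter_closure (s := ⋃₀ 𝒮)) ▸ hx
    rw [← partition_compl_sUnion Q hcover hdisj h𝒮]
    exact h.2
  rw [Set.sUnion_eq_biUnion, hfin.closure_biUnion] at hx1
  rw [Set.sUnion_eq_biUnion, (Q.finite_toSet.diff (t := 𝒮)).closure_biUnion] at hx2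
  obtain ⟨q, hq𝒮, hxq⟩ := Set.mem_iUnion₂.mp hx1
  obtain ⟨q', hq', hxq'⟩ := Set.mem_iUnion₂.mp hx2
  have hqQ : q ∈ (Q : Set (Set Y)) := h𝒮 hq𝒮
  have hne : q ≠ q' := fun h => hq'.2 (h ▸ hq𝒮)
  have hdq := hdisj hqQ hq'.1 hne
  have hxf : x ∈ frontier q := by
    refine ⟨hxq, fun hi => ?_⟩
    have hsubc : q' ⊆ qᶜ := fun a ha hain => Set.disjoint_left.mp hdq hain ha
    have : x ∈ closure qᶜ := closure_mono hsubc hxq'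
    rw [closure_compl] at this
    exact this hi
  exact Set.mem_biUnion hqQ hxf


/-- Approximation of sets in a generated σ-algebra by sets from a class `P` that contains the
generators and is stable under complements and finite unions. -/
lemma approx_of_generateFrom {Z : Type*} [m0 : MeasurableSpace Z] (ξ : Measure Z)
    [IsFiniteMeasure ξ] (C : Set (Set Z)) (hle : MeasurableSpace.generateFrom C ≤ m0)
    (P : Set Z → Prop) (h0 : P ∅) (hcompl : ∀ s, P s → P sᶜ)
    (hunion : ∀ s t, P s → P t → P (s ∪ t)) (hgen : ∀ c ∈ C, P c) :
    ∀ s, MeasurableSet[MeasurableSpace.generateFrom C] s →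
      ∀ ε : ℝ≥0∞, 0 < ε → ∃ t, P t ∧ ξ (s ∆ t) < ε := by
  intro s hs
  let G : MeasurableSpace Z :=
    { MeasurableSet' := fun s => MeasurableSet[MeasurableSpace.generateFrom C] s ∧
        ∀ ε : ℝ≥0∞, 0 < ε → ∃ t, P t ∧ ξ (s ∆ t) < ε
      measurableSet_empty := ⟨@MeasurableSet.empty _ (MeasurableSpace.generateFrom C), fun ε hε => ⟨∅, h0, by simpa using hε⟩⟩
      measurableSet_compl := by
        rintro s ⟨hm, ha⟩
        refine ⟨hm.compl, fun ε hε => ?_⟩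
        obtain ⟨t, hPt, hlt⟩ := ha ε hε
        exact ⟨tᶜ, hcompl t hPt, by rwa [compl_symmDiff_compl]⟩
      measurableSet_iUnion := by
        intro f hf
        refine ⟨MeasurableSet.iUnion (fun n => (hf n).1), fun ε hε => ?_⟩
        have hmeas : ∀ m : ℕ, MeasurableSet (f m) := fun m => hle _ (hf m).1
        set g : ℕ → Set Z := fun N => ⋃ m ∈ Finset.range N, f m with hg
        have hgmeas : ∀ N, MeasurableSet (g N) :=
          fun N => Finset.measurableSet_biUnion _ (fun m _ => hmeas m)
        have hgsub : ∀ N, g N ⊆ ⋃ m, f m := by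
          intro N x hx
          simp only [hg, Set.mem_iUnion, Finset.mem_range] at hx ⊢
          obtain ⟨m, _, hm⟩ := hx
          exact ⟨m, hm⟩
        have hganti : Antitone (fun N => (⋃ m, f m) \ g N) := by
          intro a b hab
          apply Set.diff_subset_diff_right
          intro x hx
          simp only [hg, Set.mem_iUnion, Finset.mem_range] at hx ⊢
          obtain ⟨m, hm, hm'⟩ := hx
          exact ⟨m, lt_of_lt_of_le hm hab, hm'⟩
        have hD : Tendsto (fun N => ξ ((⋃ m, f m) \ g N)) atTop (𝓝 0) := by
          have hInter : ⋂ N, ((⋃ m, f m) \ g N) = ∅ := by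
            ext x
            simp only [Set.mem_iInter, Set.mem_diff, Set.mem_empty_iff_false,
              iff_false, not_forall]
            by_cases hx : x ∈ ⋃ m, f m
            · obtain ⟨m, hm⟩ := Set.mem_iUnion.mp hx
              refine ⟨m + 1, fun hh => hh.2 ?_⟩
              simp only [hg, Set.mem_iUnion, Finset.mem_range]
              exact ⟨m, Nat.lt_succ_self m, hm⟩
            · exact ⟨0, fun hh => hx hh.1⟩
          have := tendsto_measure_iInter_atTop (μ := ξ)
            (fun N => ((MeasurableSet.iUnion hmeas).diff (hgmeas N)).nullMeasurableSet)
            hganti ⟨0, measure_ne_top ξ _⟩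
          rw [hInter] at this
          simpa [Function.comp_def] using this
        obtain ⟨N, hN⟩ := ((hD.eventually_lt_const (ENNReal.half_pos hε.ne')).exists)
        have key : ∀ r : Finset ℕ, ∀ δ : ℝ≥0∞, 0 < δ →
            ∃ t, P t ∧ ξ ((⋃ m ∈ r, f m) ∆ t) < δ := by
          intro r
          induction r using Finset.induction_on with
          | empty => exact fun δ hδ => ⟨∅, h0, by simpa using hδ⟩
          | @insert a r ha IH =>
            intro δ hδ
            obtain ⟨t1, hP1, h1⟩ := (hf a).2 (δ / 2) (ENNReal.half_pos hδ.ne')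
            obtain ⟨t2, hP2, h2⟩ := IH (δ / 2) (ENNReal.half_pos hδ.ne')
            refine ⟨t1 ∪ t2, hunion _ _ hP1 hP2, ?_⟩
            have hsub : (⋃ m ∈ insert a r, f m) ∆ (t1 ∪ t2) ⊆
                (f a ∆ t1) ∪ ((⋃ m ∈ r, f m) ∆ t2) := by
              rw [Finset.set_biUnion_insert]
              exact symmDiff_union_subset _ _ _ _
            calc ξ ((⋃ m ∈ insert a r, f m) ∆ (t1 ∪ t2))
                ≤ ξ ((f a ∆ t1) ∪ ((⋃ m ∈ r, f m) ∆ t2)) := measure_mono hsub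
              _ ≤ ξ (f a ∆ t1) + ξ ((⋃ m ∈ r, f m) ∆ t2) := measure_union_le _ _
              _ < δ / 2 + δ / 2 := ENNReal.add_lt_add h1 h2
              _ = δ := ENNReal.add_halves δ
        obtain ⟨t, hPt, ht⟩ := key (Finset.range N) (ε / 2) (ENNReal.half_pos hε.ne')
        refine ⟨t, hPt, ?_⟩
        have heq : (⋃ m, f m) ∆ g N = (⋃ m, f m) \ g N := symmDiff_of_ge (hgsub N)
        calc ξ ((⋃ m, f m) ∆ t)
            ≤ ξ ((⋃ m, f m) ∆ g N) + ξ (g N ∆ t) := meas_symmDiff_triangle ξ _ _ _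
          _ < ε / 2 + ε / 2 := by rw [heq]; exact ENNReal.add_lt_add hN ht
          _ = ε := ENNReal.add_halves ε }
  have hCle : MeasurableSpace.generateFrom C ≤ G := by
    refine MeasurableSpace.generateFrom_le (fun c hc => ?_)
    exact ⟨MeasurableSpace.measurableSet_generateFrom hc,
      fun ε hε => ⟨c, hgen c hc, by simpa [symmDiff_self] using hε⟩⟩
  exact (hCle _ hs).2


end EmbedAux

/-- **The sets `E^{n,ℓ}_μ` of `1/n`-approximate embeddings are relatively open in `M₀`** (in
the weak* topology), in the setting of a non-trivial ergodic subshift `(Xs, μ, σX)` and a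
self-homeomorphism `S`, with almost weak specification, of a compact metric space `Y` having
the small boundary property witnessed by the refining partitions `Q_ℓ`. -/
theorem approxEmbeddings_relatively_open
    (k : ℕ) (Xs : Set (ℤ → Fin k)) (hne : Xs.Nonempty) (hcl : IsClosed Xs)
    (hsinv : fullShift '' Xs = Xs) (hnontriv : ¬ Xs.Finite)
    (σX : ↥Xs ≃ ↥Xs) (hσ : ∀ x : ↥Xs, (σX x : ℤ → Fin k) = fullShift (x : ℤ → Fin k))
    (μ : Measure ↥Xs) [IsProbabilityMeasure μ] (herg : Ergodic (⇑σX) μ)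
    {Y : Type*} [MetricSpace Y] [CompactSpace Y] [MeasurableSpace Y] [BorelSpace Y]
    (S : Y ≃ₜ Y) (hspec : AlmostWeakSpec S.toEquiv)
    (Q : ℕ → Finset (Set Y))
    (hQpart : ∀ ℓ, 1 ≤ ℓ → IsFinPartition (Q ℓ))
    (hQdiam : ∀ ℓ, 1 ≤ ℓ → ∀ s ∈ Q ℓ, Metric.diam s < 1 / ℓ)
    (hQrefine : ∀ ℓ, 1 ≤ ℓ → ∀ s ∈ Q (ℓ + 1), ∃ t ∈ Q ℓ, s ⊆ t)
    (hQbdry : ∀ ℓ, 1 ≤ ℓ → ∀ ν : Measure Y, IsProbabilityMeasure ν →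
      MeasurePreserving (⇑S) ν ν → ν (⋃ s ∈ Q ℓ, frontier s) = 0)
    (hent : (ksEntropy μ (⇑σX) : EReal) < topEntropy (⇑S)) :
    ∀ n ℓ : ℕ, 1 ≤ n → 1 ≤ ℓ →
      ∃ U : Set (ProbabilityMeasure (↥Xs × Y)), IsOpen U ∧
        approxEmbeddings Xs σX μ S Q n ℓ = U ∩ joiningM0 Xs σX μ S := by
  intro n ℓ hn hℓ
  classical
  haveI hXscomp : CompactSpace ↥Xs := isCompact_iff_compactSpace.mp hcl.isCompact
  obtain ⟨hQmeas, hQcover, hQdisj⟩ := hQpart ℓ hℓ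
  set c : ℝ≥0∞ := ENNReal.ofReal (1 / (n : ℝ)) with hc
  have hcne : c ≠ ⊤ := ENNReal.ofReal_ne_top
  -- continuity of the shift and its powers
  have hσXcont : Continuous ⇑σX := by
    apply continuous_induced_rng.mpr
    have heq : (Subtype.val ∘ ⇑σX : ↥Xs → ℤ → Fin k)
        = fun x : ↥Xs => fullShift (x : ℤ → Fin k) := funext fun x => hσ x
    rw [heq]
    exact (continuous_pi fun m => continuous_apply (m + 1)).comp continuous_subtype_val
  have hσXinvcont : Continuous ⇑(σX⁻¹) :=
    (Continuous.homeoOfEquivCompactToT2 (f := σX) hσXcont).symm.continuous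
  have hσXz : ∀ i : ℤ, Continuous ⇑(σX ^ i) := by
    intro i
    induction i using Int.induction_on with
    | zero => simp only [zpow_zero, Equiv.Perm.coe_one]; exact continuous_id
    | succ j ih => rw [zpow_add_one, Equiv.Perm.coe_mul]; exact ih.comp hσXcont
    | pred j ih => rw [zpow_sub_one, Equiv.Perm.coe_mul]; exact ih.comp hσXinvcont
  have hSz : ∀ i : ℤ, Continuous ⇑(S.toEquiv ^ i) := by
    intro i
    induction i using Int.induction_on with
    | zero => simp only [zpow_zero, Equiv.Perm.coe_one]; exact continuous_id
    | succ j ih => rw [zpow_add_one, Equiv.Perm.coe_mul]; exact ih.comp S.continuous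
    | pred j ih => rw [zpow_sub_one, Equiv.Perm.coe_mul]; exact ih.comp S.symm.continuous
  -- the σ-algebra for condition (i) and its generators
  set gP : ℤ → (↥Xs × Y) → Fin k := fun i p => ((σX ^ i) p.1 : ℤ → Fin k) 0 with hgP
  have hgPcont : ∀ i, Continuous (gP i) := fun i =>
    (continuous_apply (0 : ℤ)).comp (continuous_subtype_val.comp ((hσXz i).comp continuous_fst))
  have hM1eq : (MeasurableSpace.comap Prod.fst (natPartOrbitAlg k Xs σX)) = ⨆ i : ℤ, MeasurableSpace.comap (gP i) ⊤ := by
    rw [natPartOrbitAlg, MeasurableSpace.comap_iSup]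
    refine iSup_congr fun i => ?_
    rw [MeasurableSpace.comap_comp]
    rfl
  set C1 : Set (Set (↥Xs × Y)) := ⋃ i : ℤ, Set.range (fun A : Set (Fin k) => gP i ⁻¹' A)
    with hC1
  have hP1gen : ∀ cs ∈ C1, MeasurableSet[(MeasurableSpace.comap Prod.fst (natPartOrbitAlg k Xs σX))] cs ∧ IsClopen cs := by
    rintro cs hcs
    simp only [hC1, Set.mem_iUnion, Set.mem_range] at hcs
    obtain ⟨i, A, rfl⟩ := hcs
    constructor
    · have hle : MeasurableSpace.comap (gP i) ⊤ ≤ (MeasurableSpace.comap Prod.fst (natPartOrbitAlg k Xs σX)) :=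
        hM1eq ▸ le_iSup (fun i => MeasurableSpace.comap (gP i) ⊤) i
      exact hle _ ⟨A, MeasurableSpace.measurableSet_top, rfl⟩
    · exact (isClopen_discrete A).preimage (hgPcont i)
  have hM1gen : (MeasurableSpace.comap Prod.fst (natPartOrbitAlg k Xs σX)) ≤ MeasurableSpace.generateFrom C1 := by
    rw [hM1eq]
    refine iSup_le fun i => ?_
    rintro s ⟨A, -, rfl⟩
    exact MeasurableSpace.measurableSet_generateFrom (by
      simp only [hC1, Set.mem_iUnion, Set.mem_range]; exact ⟨i, A, rfl⟩)
  have hC1le : MeasurableSpace.generateFrom C1 ≤ (inferInstance : MeasurableSpace (↥Xs × Y)) := by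
    refine MeasurableSpace.generateFrom_le fun cs hcs => ?_
    simp only [hC1, Set.mem_iUnion, Set.mem_range] at hcs
    obtain ⟨i, A, rfl⟩ := hcs
    exact ((isClopen_discrete A).preimage (hgPcont i)).isOpen.measurableSet
  -- the σ-algebra for condition (ii) and its generators
  set sP : ℤ → (↥Xs × Y) → Y := fun i p => (S.toEquiv ^ i) p.2 with hsP
  have hsPcont : ∀ i, Continuous (sP i) := fun i => (hSz i).comp continuous_snd
  set C2 : Set (Set (↥Xs × Y)) := ⋃ i : ℤ, (fun q => sP i ⁻¹' q) '' ↑(Q ℓ) with hC2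
  have hM2eq : (MeasurableSpace.comap Prod.snd (partOrbitAlg S.toEquiv (Q ℓ))) = MeasurableSpace.generateFrom C2 := by
    rw [partOrbitAlg, MeasurableSpace.comap_iSup]
    have h1 : ∀ i : ℤ, (MeasurableSpace.comap (⇑(S.toEquiv ^ i)) (partAlg (Q ℓ))).comap Prod.snd
        = MeasurableSpace.generateFrom ((fun q => sP i ⁻¹' q) '' ↑(Q ℓ)) := by
      intro i
      rw [MeasurableSpace.comap_comp, partAlg, MeasurableSpace.comap_generateFrom]
      rfl
    calc (⨆ i : ℤ, (MeasurableSpace.comap (⇑(S.toEquiv ^ i)) (partAlg (Q ℓ))).comap Prod.snd)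
        = ⨆ i : ℤ, MeasurableSpace.generateFrom ((fun q => sP i ⁻¹' q) '' ↑(Q ℓ)) :=
          iSup_congr h1
      _ = MeasurableSpace.generateFrom C2 := MeasurableSpace.iSup_generateFrom _
  have hC2le : MeasurableSpace.generateFrom C2 ≤ (inferInstance : MeasurableSpace (↥Xs × Y)) := by
    refine MeasurableSpace.generateFrom_le fun cs hcs => ?_
    simp only [hC2, Set.mem_iUnion, Set.mem_image, Finset.mem_coe] at hcs
    obtain ⟨i, q, hq, rfl⟩ := hcs
    exact (hsPcont i).measurable (hQmeas q hq)
  set g0 : (↥Xs × Y) → Fin k := (fun x : ↥Xs => (x : ℤ → Fin k) 0) ∘ Prod.fst with hg0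
  have hg0cont : Continuous g0 :=
    (continuous_apply (0 : ℤ)).comp (continuous_subtype_val.comp continuous_fst)
  -- the heart: an open neighbourhood around each point of the set
  have key : ∀ ξ₀ ∈ approxEmbeddings Xs σX μ S Q n ℓ,
      ∃ W : Set (ProbabilityMeasure (↥Xs × Y)), IsOpen W ∧ ξ₀ ∈ W ∧
        ∀ ξ, ξ ∈ W → ξ ∈ joiningM0 Xs σX μ S → ξ ∈ approxEmbeddings Xs σX μ S Q n ℓ := by
    rintro ξ₀ ⟨hM0, h1, h2⟩
    obtain ⟨hmarg, herg', hent'⟩ := hM0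
    set ξm : Measure (↥Xs × Y) := (ξ₀ : Measure (↥Xs × Y)) with hξm
    set ν₀ : Measure Y := ξm.map Prod.snd with hν₀
    haveI : IsProbabilityMeasure ν₀ := Measure.isProbabilityMeasure_map measurable_snd.aemeasurable
    have hPmapMeas : Measurable (Prod.map ⇑σX ⇑S) := (hσXcont.prodMap S.continuous).measurable
    have hmapS : Measure.map ⇑S ν₀ = ν₀ := by
      rw [hν₀, Measure.map_map S.continuous.measurable measurable_snd]
      have hcomm : (⇑S ∘ Prod.snd : ↥Xs × Y → Y) = Prod.snd ∘ Prod.map ⇑σX ⇑S := rfl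
      rw [hcomm, ← Measure.map_map measurable_snd hPmapMeas,
        herg'.toMeasurePreserving.map_eq]
    have hSpres : MeasurePreserving ⇑S ν₀ ν₀ := ⟨S.continuous.measurable, hmapS⟩
    have hmapSsymm : Measure.map ⇑S.symm ν₀ = ν₀ := by
      have h := congrArg (Measure.map ⇑S.symm) hmapS
      rw [Measure.map_map S.symm.continuous.measurable S.continuous.measurable,
        (by funext y; simp : (⇑S.symm ∘ ⇑S : Y → Y) = id), Measure.map_id] at h
      exact h.symm
    have hSzpres : ∀ i : ℤ, Measure.map ⇑(S.toEquiv ^ i) ν₀ = ν₀ := by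
      intro i
      induction i using Int.induction_on with
      | zero => simp only [zpow_zero, Equiv.Perm.coe_one]; exact Measure.map_id
      | succ j ih =>
        rw [zpow_add_one, Equiv.Perm.coe_mul, show ⇑S.toEquiv = ⇑S from rfl,
          ← Measure.map_map (hSz j).measurable S.continuous.measurable, hmapS, ih]
      | pred j ih =>
        rw [zpow_sub_one, Equiv.Perm.coe_mul, show ⇑(S.toEquiv)⁻¹ = ⇑S.symm from rfl,
          ← Measure.map_map (hSz (-j)).measurable S.symm.continuous.measurable, hmapSsymm, ih]
    have hQ0 : ν₀ (⋃ q ∈ Q ℓ, frontier q) = 0 := hQbdry ℓ hℓ ν₀ inferInstance hSpres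
    have hQfmeas : MeasurableSet (⋃ q ∈ Q ℓ, frontier q) :=
      Finset.measurableSet_biUnion _ (fun q _ => isClosed_frontier.measurableSet)
    -- approximations for condition (i)
    have approx1 := EmbedAux.approx_of_generateFrom ξm C1 hC1le
      (fun t => MeasurableSet[(MeasurableSpace.comap Prod.fst (natPartOrbitAlg k Xs σX))] t ∧ IsClopen t)
      ⟨@MeasurableSet.empty _ (MeasurableSpace.comap Prod.fst (natPartOrbitAlg k Xs σX)), isClopen_empty⟩
      (fun s hs => ⟨hs.1.compl, hs.2.compl⟩)
      (fun s t hs ht => ⟨hs.1.union ht.1, hs.2.union ht.2⟩)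
      hP1gen
    -- approximations for condition (ii)
    have hP2gen : ∀ cs ∈ C2, MeasurableSet[(MeasurableSpace.comap Prod.snd (partOrbitAlg S.toEquiv (Q ℓ)))] cs ∧ ξm (frontier cs) = 0 := by
      rintro cs hcs
      have hcs' := hcs
      simp only [hC2, Set.mem_iUnion, Set.mem_image, Finset.mem_coe] at hcs'
      obtain ⟨i, q, hq, rfl⟩ := hcs'
      refine ⟨by rw [hM2eq]; exact MeasurableSpace.measurableSet_generateFrom hcs, ?_⟩
      have hsub : frontier (sP i ⁻¹' q) ⊆ sP i ⁻¹' frontier q :=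
        (hsPcont i).frontier_preimage_subset q
      have hfq : MeasurableSet (frontier q) := isClosed_frontier.measurableSet
      have hξν : ξm (sP i ⁻¹' frontier q) = ν₀ (⇑(S.toEquiv ^ i) ⁻¹' frontier q) := by
        rw [hν₀, Measure.map_apply measurable_snd ((hSz i).measurable hfq)]
        rfl
      have h2' : ν₀ (⇑(S.toEquiv ^ i) ⁻¹' frontier q) = ν₀ (frontier q) := by
        conv_rhs => rw [← hSzpres i]
        rw [Measure.map_apply (hSz i).measurable hfq]
      have hq0 : ν₀ (frontier q) = 0 :=
        measure_mono_null (Set.subset_biUnion_of_mem hq) hQ0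
      exact measure_mono_null hsub (by rw [hξν, h2', hq0])
    have approx2 := EmbedAux.approx_of_generateFrom ξm C2 hC2le
      (fun t => MeasurableSet[(MeasurableSpace.comap Prod.snd (partOrbitAlg S.toEquiv (Q ℓ)))] t ∧ ξm (frontier t) = 0)
      ⟨@MeasurableSet.empty _ (MeasurableSpace.comap Prod.snd (partOrbitAlg S.toEquiv (Q ℓ))), by simp⟩
      (fun s hs => ⟨hs.1.compl, by rw [frontier_compl]; exact hs.2⟩)
      (fun s t hs ht => ⟨hs.1.union ht.1,
        measure_mono_null (EmbedAux.frontier_union_subset' s t)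
          (measure_union_null hs.2 ht.2)⟩)
      hP2gen
    -- neighbourhoods for condition (i)
    have hfam1 : ∀ 𝒮 : Set (Set Y), 𝒮 ⊆ ↑(Q ℓ) →
        ∃ t' W, MeasurableSet[(MeasurableSpace.comap Prod.fst (natPartOrbitAlg k Xs σX))] t' ∧ IsOpen W ∧ ξ₀ ∈ W ∧
          ∀ ξ : ProbabilityMeasure (↥Xs × Y), ξ ∈ W →
            (ξ : Measure (↥Xs × Y)) ((Prod.snd ⁻¹' ⋃₀ 𝒮) ∆ t') < c := by
      intro 𝒮 h𝒮
      set sA : Set (↥Xs × Y) := Prod.snd ⁻¹' ⋃₀ 𝒮 with hsA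
      have hsAmeas : MeasurableSet[MeasurableSpace.comap Prod.snd (partAlg (Q ℓ))] sA := by
        refine ⟨⋃₀ 𝒮, ?_, rfl⟩
        exact MeasurableSet.sUnion ((Q ℓ).finite_toSet.subset h𝒮).countable
          (fun q hq => MeasurableSpace.measurableSet_generateFrom (h𝒮 hq))
      obtain ⟨t, htmeas, htlt⟩ := h1 sA hsAmeas
      set a := ξm (sA ∆ t) with ha
      have halt : a < c := htlt
      have hane : a ≠ ⊤ := (halt.trans (lt_top_iff_ne_top.mpr hcne)).ne
      set δ := (c - a) / 2 with hδ
      have hδpos : 0 < δ := ENNReal.half_pos (tsub_pos_of_lt halt).ne'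
      have hδlt : a + δ < c := by
        have h1' : δ < c - a := ENNReal.half_lt_self (tsub_pos_of_lt halt).ne'
          (tsub_le_self.trans_lt (lt_top_iff_ne_top.mpr hcne)).ne
        calc a + δ < a + (c - a) := ENNReal.add_lt_add_left hane h1'
          _ = c := add_tsub_cancel_of_le halt.le
      obtain ⟨t', hP1t', ht'δ⟩ := approx1 t (hM1gen t htmeas) δ hδpos
      have hlt' : ξm (sA ∆ t') < c := by
        refine lt_of_le_of_lt (EmbedAux.meas_symmDiff_triangle ξm sA t t') ?_
        exact (ENNReal.add_lt_add_left hane ht'δ).trans hδlt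
      have hfront : ξm (frontier (sA ∆ t')) = 0 := by
        have h3' : frontier sA ⊆ Prod.snd ⁻¹' (⋃ q ∈ Q ℓ, frontier q) := by
          refine (continuous_snd.frontier_preimage_subset _).trans ?_
          exact Set.preimage_mono (EmbedAux.frontier_sUnion_subset (Q ℓ) hQcover hQdisj h𝒮)
        have h4' : ξm (Prod.snd ⁻¹' (⋃ q ∈ Q ℓ, frontier q)) = 0 := by
          have hmm : ξm (Prod.snd ⁻¹' (⋃ q ∈ Q ℓ, frontier q))
              = ν₀ (⋃ q ∈ Q ℓ, frontier q) := by
            rw [hν₀, Measure.map_apply measurable_snd hQfmeas]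
          rw [hmm, hQ0]
        refine measure_mono_null ((EmbedAux.frontier_symmDiff_subset sA t').trans ?_) h4'
        rw [hP1t'.2.frontier_eq, Set.union_empty]
        exact h3'
      have hclo : ξm (closure (sA ∆ t')) < c := by
        refine lt_of_le_of_lt (measure_mono (EmbedAux.closure_subset_union_frontier _)) ?_
        refine lt_of_le_of_lt (measure_union_le _ _) ?_
        rw [hfront, add_zero]
        exact hlt'
      obtain ⟨W, hWopen, hWmem, hWlt⟩ :=
        EmbedAux.exists_open_nhds_measure_lt isClosed_closure ξ₀ hclo
      exact ⟨t', W, hP1t'.1, hWopen, hWmem, fun ξ hξ =>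
        lt_of_le_of_lt (measure_mono subset_closure) (hWlt ξ hξ)⟩
    -- neighbourhoods for condition (ii)
    have hfam2 : ∀ A : Set (Fin k),
        ∃ t' W, MeasurableSet[(MeasurableSpace.comap Prod.snd (partOrbitAlg S.toEquiv (Q ℓ)))] t' ∧ IsOpen W ∧ ξ₀ ∈ W ∧
          ∀ ξ : ProbabilityMeasure (↥Xs × Y), ξ ∈ W →
            (ξ : Measure (↥Xs × Y)) ((g0 ⁻¹' A) ∆ t') < c := by
      intro A
      set sA : Set (↥Xs × Y) := g0 ⁻¹' A with hsA
      have hsAmeas : MeasurableSet[MeasurableSpace.comap Prod.fst (natPartAlg k Xs)] sA := by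
        rw [natPartAlg, MeasurableSpace.comap_comp]
        exact ⟨A, MeasurableSpace.measurableSet_top, rfl⟩
      obtain ⟨t, htmeas, htlt⟩ := h2 sA hsAmeas
      set a := ξm (sA ∆ t) with ha
      have halt : a < c := htlt
      have hane : a ≠ ⊤ := (halt.trans (lt_top_iff_ne_top.mpr hcne)).ne
      set δ := (c - a) / 2 with hδ
      have hδpos : 0 < δ := ENNReal.half_pos (tsub_pos_of_lt halt).ne'
      have hδlt : a + δ < c := by
        have h1' : δ < c - a := ENNReal.half_lt_self (tsub_pos_of_lt halt).ne'
          (tsub_le_self.trans_lt (lt_top_iff_ne_top.mpr hcne)).ne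
        calc a + δ < a + (c - a) := ENNReal.add_lt_add_left hane h1'
          _ = c := add_tsub_cancel_of_le halt.le
      have htC2 : MeasurableSet[MeasurableSpace.generateFrom C2] t := by
        rw [← hM2eq]; exact htmeas
      obtain ⟨t', hP2t', ht'δ⟩ := approx2 t htC2 δ hδpos
      have hlt' : ξm (sA ∆ t') < c := by
        refine lt_of_le_of_lt (EmbedAux.meas_symmDiff_triangle ξm sA t t') ?_
        exact (ENNReal.add_lt_add_left hane ht'δ).trans hδlt
      have hfront : ξm (frontier (sA ∆ t')) = 0 := by
        have hsAclop : IsClopen sA := (isClopen_discrete A).preimage hg0cont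
        refine measure_mono_null ((EmbedAux.frontier_symmDiff_subset sA t').trans ?_) hP2t'.2
        rw [hsAclop.frontier_eq, Set.empty_union]
      have hclo : ξm (closure (sA ∆ t')) < c := by
        refine lt_of_le_of_lt (measure_mono (EmbedAux.closure_subset_union_frontier _)) ?_
        refine lt_of_le_of_lt (measure_union_le _ _) ?_
        rw [hfront, add_zero]
        exact hlt'
      obtain ⟨W, hWopen, hWmem, hWlt⟩ :=
        EmbedAux.exists_open_nhds_measure_lt isClosed_closure ξ₀ hclo
      exact ⟨t', W, hP2t'.1, hWopen, hWmem, fun ξ hξ =>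
        lt_of_le_of_lt (measure_mono subset_closure) (hWlt ξ hξ)⟩
    choose T1 W1 hT1meas hW1open hW1mem hW1lt using
      fun p : {𝒮 : Set (Set Y) // 𝒮 ⊆ ↑(Q ℓ)} => hfam1 p.1 p.2
    choose T2 W2 hT2meas hW2open hW2mem hW2lt using hfam2
    haveI hι₁ : Finite {𝒮 : Set (Set Y) // 𝒮 ⊆ ↑(Q ℓ)} :=
      ((Q ℓ).finite_toSet.finite_subsets).to_subtype
    refine ⟨(⋂ p, W1 p) ∩ (⋂ A, W2 A),
      (isOpen_iInter_of_finite hW1open).inter (isOpen_iInter_of_finite hW2open),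
      ⟨Set.mem_iInter.mpr hW1mem, Set.mem_iInter.mpr hW2mem⟩, ?_⟩
    rintro ξ ⟨hξW1, hξW2⟩ hξM0
    refine ⟨hξM0, ?_, ?_⟩
    · intro s hs
      obtain ⟨s', hs', rfl⟩ := MeasurableSpace.measurableSet_comap.mp hs
      obtain ⟨𝒮, h𝒮, rfl⟩ := EmbedAux.partition_eq_sUnion (Q ℓ) hQcover hQdisj s' hs'
      exact ⟨T1 ⟨𝒮, h𝒮⟩, hT1meas ⟨𝒮, h𝒮⟩, hW1lt ⟨𝒮, h𝒮⟩ ξ (Set.mem_iInter.mp hξW1 _)⟩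
    · intro s hs
      rw [natPartAlg, MeasurableSpace.comap_comp] at hs
      obtain ⟨A, -, rfl⟩ := MeasurableSpace.measurableSet_comap.mp hs
      exact ⟨T2 A, hT2meas A, hW2lt A ξ (Set.mem_iInter.mp hξW2 _)⟩
  -- assemble the global open set
  choose W hWopen hWmem hWsub using key
  refine ⟨⋃ p : {ξ // ξ ∈ approxEmbeddings Xs σX μ S Q n ℓ}, W p.1 p.2,
    isOpen_iUnion fun p => hWopen p.1 p.2, ?_⟩
  apply Set.Subset.antisymm
  · intro ξ hξ
    exact ⟨Set.mem_iUnion.mpr ⟨⟨ξ, hξ⟩, hWmem ξ hξ⟩, hξ.1⟩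
  · rintro ξ ⟨hU, hM0⟩
    obtain ⟨p, hp⟩ := Set.mem_iUnion.mp hU
    exact hWsub p.1 p.2 ξ hp hM0
end
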